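/- Let C ⊆ {0,1}^n be a concept class with |C| = m ≥ 2, let k ≥ 1, and let 0 ≤ ε < 1/2. Suppose there exist a unit vector ψ ∈ ℂ^{(n+1)^k} and a family of positive semidefinite matrices (M_x)_{x ∈ C} on ℂ^{(n+1)^k} with Σ_{x∈C} M_x ≤ I, such that ⟨ψ| O_x^{⊗k} M_x O_x^{⊗k} |ψ⟩ ≥ 1−ε for every x ∈ C. Then there exists a set S ⊆ [n] with |S| ≤ 4k·log₂(m) / (1 − 2√(ε(1−ε))) such that S separates C, i.e., every pair of distinct concepts in C differs on at least one index in S. -/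

import Mathlib

open Matrix
open scoped ComplexOrder

/-- Extend an `n`-bit string `x` to indices `0,…,n` with `x₀ := 0` (false). -/
noncomputable def extendBit {n : ℕ} (x : Fin n → Bool) : Fin (n + 1) → Bool :=
  Fin.cases false x

/-- The `k`-fold tensor power `O_x^{⊗k}` of the phase oracle of `x`:
the diagonal matrix on `ℂ^{(n+1)^k}` acting as
`O_x^{⊗k}|i₁,…,i_k⟩ = (−1)^{x_{i₁}+⋯+x_{i_k}}|i₁,…,i_k⟩`. -/
noncomputable def oracleK (n k : ℕ) (x : Fin n → Bool) :
    Matrix (Fin k → Fin (n + 1)) (Fin k → Fin (n + 1)) ℂ :=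
  Matrix.diagonal fun i => ∏ m, if extendBit x (i m) then (-1 : ℂ) else 1

/-! ### Auxiliary definitions -/

/-- Real-valued version of the diagonal phase. -/
noncomputable def dsign {n : ℕ} (k : ℕ) (x : Fin n → Bool) (i : Fin k → Fin (n + 1)) : ℝ :=
  ∏ m, if extendBit x (i m) then (-1 : ℝ) else 1

/-- Query mass placed on index `j`. -/
noncomputable def qwt {n k : ℕ} (ψ : (Fin k → Fin (n + 1)) → ℂ) (j : Fin n) : ℝ :=
  ∑ i, ‖ψ i‖ ^ 2 * ((Finset.univ.filter fun m => i m = j.succ).card : ℝ)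

lemma oracleK_eq (n k : ℕ) (x : Fin n → Bool) :
    oracleK n k x = Matrix.diagonal fun i => ((dsign k x i : ℝ) : ℂ) := by
  have h : ∀ i : Fin k → Fin (n + 1),
      (∏ m, if extendBit x (i m) then (-1 : ℂ) else 1) =
        ((∏ m, if extendBit x (i m) then (-1 : ℝ) else 1 : ℝ) : ℂ) := by
    intro i
    rw [Complex.ofReal_prod]
    refine Finset.prod_congr rfl fun m _ => ?_
    split <;> simp
  unfold oracleK dsign
  simp only [h]

lemma dsign_mul_self {n : ℕ} (k : ℕ) (x : Fin n → Bool) (i : Fin k → Fin (n + 1)) :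
    dsign k x i * dsign k x i = 1 := by
  unfold dsign
  rw [← Finset.prod_mul_distrib]
  refine Finset.prod_eq_one fun m _ => ?_
  split <;> norm_num

lemma oracleK_conjTranspose (n k : ℕ) (x : Fin n → Bool) :
    (oracleK n k x)ᴴ = oracleK n k x := by
  have hst : (star fun i : Fin k → Fin (n + 1) => ((dsign k x i : ℝ) : ℂ)) =
      fun i => ((dsign k x i : ℝ) : ℂ) := by
    funext i
    simp [Complex.conj_ofReal]
  rw [oracleK_eq, Matrix.diagonal_conjTranspose, hst]

/-- Sandwich identity: `⟨ψ, O N O ψ⟩ = ⟨Oψ, N (Oψ)⟩`. -/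
lemma sandwich (n k : ℕ) (x : Fin n → Bool)
    (N : Matrix (Fin k → Fin (n + 1)) (Fin k → Fin (n + 1)) ℂ)
    (ψ : (Fin k → Fin (n + 1)) → ℂ) :
    star ψ ⬝ᵥ ((oracleK n k x * N * oracleK n k x) *ᵥ ψ) =
      star (oracleK n k x *ᵥ ψ) ⬝ᵥ (N *ᵥ (oracleK n k x *ᵥ ψ)) := by
  rw [← Matrix.mulVec_mulVec, ← Matrix.mulVec_mulVec,
    Matrix.dotProduct_mulVec (star ψ) (oracleK n k x)]
  congr 1
  rw [Matrix.star_mulVec, oracleK_conjTranspose]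

/-- Inner product of two oracle-rotated states. -/
lemma inner_formula {n k : ℕ} (x y : Fin n → Bool) (ψ : (Fin k → Fin (n + 1)) → ℂ) :
    star (oracleK n k x *ᵥ ψ) ⬝ᵥ (oracleK n k y *ᵥ ψ) =
      ((∑ i, dsign k x i * dsign k y i * ‖ψ i‖ ^ 2 : ℝ) : ℂ) := by
  rw [oracleK_eq, oracleK_eq, Complex.ofReal_sum]
  simp only [dotProduct, Pi.star_apply, Matrix.mulVec_diagonal]
  refine Finset.sum_congr rfl fun i _ => ?_
  have h1 : star (((dsign k x i : ℝ) : ℂ) * ψ i) =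
      ((dsign k x i : ℝ) : ℂ) * star (ψ i) := by
    rw [star_mul']
    congr 1
    exact Complex.conj_ofReal _
  rw [h1]
  have h2 : star (ψ i) * ψ i = ((‖ψ i‖ ^ 2 : ℝ) : ℂ) := by
    rw [Complex.star_def, ← Complex.normSq_eq_conj_mul_self, Complex.normSq_eq_norm_sq]
  calc ((dsign k x i : ℝ) : ℂ) * star (ψ i) * (((dsign k y i : ℝ) : ℂ) * ψ i)
      = ((dsign k x i : ℝ) : ℂ) * ((dsign k y i : ℝ) : ℂ) * (star (ψ i) * ψ i) := by ring
    _ = ((dsign k x i : ℝ) : ℂ) * ((dsign k y i : ℝ) : ℂ) * ((‖ψ i‖ ^ 2 : ℝ) : ℂ) := by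
        rw [h2]
    _ = _ := by push_cast; ring

/-- Cauchy–Schwarz for PSD quadratic forms. -/
lemma psd_cauchy_schwarz {ι : Type*} [Fintype ι] [DecidableEq ι]
    {M : Matrix ι ι ℂ} (hM : M.PosSemidef) (u v : ι → ℂ) :
    ‖star u ⬝ᵥ (M *ᵥ v)‖ ≤
      Real.sqrt (star u ⬝ᵥ (M *ᵥ u)).re * Real.sqrt (star v ⬝ᵥ (M *ᵥ v)).re := by
  obtain ⟨A, rfl⟩ : ∃ A : Matrix ι ι ℂ, M = Aᴴ * A := by
    open scoped MatrixOrder in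
    obtain ⟨B, hB⟩ := CStarAlgebra.nonneg_iff_eq_star_mul_self.mp hM.nonneg
    exact ⟨B, hB⟩
  have key : ∀ a b : ι → ℂ,
      star a ⬝ᵥ ((Aᴴ * A) *ᵥ b) = star (A *ᵥ a) ⬝ᵥ (A *ᵥ b) := by
    intro a b
    rw [← Matrix.mulVec_mulVec, Matrix.dotProduct_mulVec (star a) Aᴴ]
    congr 1
    rw [Matrix.star_mulVec]
  rw [key, key, key]
  set a : EuclideanSpace ℂ ι := WithLp.toLp 2 (A *ᵥ u)
  set b : EuclideanSpace ℂ ι := WithLp.toLp 2 (A *ᵥ v)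
  have hdot : ∀ c d : EuclideanSpace ℂ ι,
      (inner ℂ c d : ℂ) = star (WithLp.ofLp c) ⬝ᵥ WithLp.ofLp d := by
    intro c d
    rw [EuclideanSpace.inner_eq_star_dotProduct, dotProduct_comm]
  have h1 : star (A *ᵥ u) ⬝ᵥ (A *ᵥ v) = (inner ℂ a b : ℂ) := (hdot a b).symm
  have h2 : star (A *ᵥ u) ⬝ᵥ (A *ᵥ u) = (inner ℂ a a : ℂ) := (hdot a a).symm
  have h3 : star (A *ᵥ v) ⬝ᵥ (A *ᵥ v) = (inner ℂ b b : ℂ) := (hdot b b).symm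
  rw [h1, h2, h3]
  have hre : ∀ c : EuclideanSpace ℂ ι, ((inner ℂ c c : ℂ)).re = ‖c‖ ^ 2 := by
    intro c
    rw [inner_self_eq_norm_sq_to_K (𝕜 := ℂ) c]
    norm_cast
  have hna : Real.sqrt ((inner ℂ a a : ℂ)).re = ‖a‖ := by
    rw [hre a]; exact Real.sqrt_sq (norm_nonneg a)
  have hnb : Real.sqrt ((inner ℂ b b : ℂ)).re = ‖b‖ := by
    rw [hre b]; exact Real.sqrt_sq (norm_nonneg b)
  rw [hna, hnb]
  exact norm_inner_le_norm a b

/-- `(-1)^c ≥ 1 - 2c`. -/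
lemma neg_one_pow_ge (c : ℕ) : (1 : ℝ) - 2 * c ≤ (-1 : ℝ) ^ c := by
  cases c with
  | zero => norm_num
  | succ d =>
    have hd : (0 : ℝ) ≤ (d : ℝ) := Nat.cast_nonneg d
    have h1 : (-1 : ℝ) ≤ (-1 : ℝ) ^ (d + 1) := by
      rcases Nat.even_or_odd (d + 1) with he | ho
      · rw [he.neg_one_pow]; norm_num
      · rw [ho.neg_one_pow]
    push_cast
    linarith

/-- The key numeric inequality: distinguishability bound. -/
lemma sqrt_bound {ε a b : ℝ} (hε0 : 0 ≤ ε) (hε1 : ε < 1 / 2)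
    (ha1 : 1 - ε ≤ a) (ha2 : a ≤ 1) (hb0 : 0 ≤ b) (hb : b ≤ ε) :
    Real.sqrt a * Real.sqrt b + Real.sqrt (1 - a) * Real.sqrt (1 - b) ≤
      2 * Real.sqrt (ε * (1 - ε)) := by
  have ha0 : 0 ≤ a := by linarith
  have h1a : 0 ≤ 1 - a := by linarith
  have h1b : 0 ≤ 1 - b := by linarith
  have sa := Real.sq_sqrt ha0
  have sb := Real.sq_sqrt hb0
  have s1a := Real.sq_sqrt h1a
  have s1b := Real.sq_sqrt h1b
  have na := Real.sqrt_nonneg a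
  have nb := Real.sqrt_nonneg b
  have n1a := Real.sqrt_nonneg (1 - a)
  have n1b := Real.sqrt_nonneg (1 - b)
  set L := Real.sqrt a * Real.sqrt b + Real.sqrt (1 - a) * Real.sqrt (1 - b) with hL
  have hL0 : 0 ≤ L := by positivity
  have e1 : (Real.sqrt a * Real.sqrt b) ^ 2 = a * b := by rw [mul_pow, sa, sb]
  have e2 : (Real.sqrt (1 - a) * Real.sqrt (1 - b)) ^ 2 = (1 - a) * (1 - b) := by
    rw [mul_pow, s1a, s1b]
  have key : L ^ 2 ≤ 4 * (ε * (1 - ε)) := by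
    have cross : 2 * (Real.sqrt a * Real.sqrt b) * (Real.sqrt (1 - a) * Real.sqrt (1 - b)) ≤
        a * (1 - a) + b * (1 - b) := by
      nlinarith [sq_nonneg (Real.sqrt a * Real.sqrt (1 - a) - Real.sqrt b * Real.sqrt (1 - b)),
        sa, sb, s1a, s1b]
    have h6 : 1 - 2 * ε ≤ a - b := by linarith
    have h7 : (0 : ℝ) ≤ 1 - 2 * ε := by linarith
    have hsq : (1 - 2 * ε) ^ 2 ≤ (a - b) ^ 2 := by nlinarith
    have hLsq : L ^ 2 = a * b + (1 - a) * (1 - b) +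
        2 * (Real.sqrt a * Real.sqrt b) * (Real.sqrt (1 - a) * Real.sqrt (1 - b)) := by
      rw [hL, add_sq, e1, e2]; ring
    nlinarith [cross, hsq, hLsq]
  calc L = Real.sqrt (L ^ 2) := (Real.sqrt_sq hL0).symm
    _ ≤ Real.sqrt (4 * (ε * (1 - ε))) := Real.sqrt_le_sqrt key
    _ = 2 * Real.sqrt (ε * (1 - ε)) := by
        rw [show (4 : ℝ) * (ε * (1 - ε)) = 2 ^ 2 * (ε * (1 - ε)) by ring,
          Real.sqrt_mul (by positivity), Real.sqrt_sq (by norm_num)]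

/-- Greedy hitting-set lemma. -/
lemma greedy_hitting {n : ℕ} (q : Fin n → ℝ) (hq : ∀ j, 0 ≤ q j) (K w : ℝ)
    (hw : 0 < w) (hwK : w < K) (hK : ∑ j, q j ≤ K) :
    ∀ t : ℕ, ∀ F : Finset (Finset (Fin n)),
      (∀ A ∈ F, w ≤ ∑ j ∈ A, q j) → (F.card : ℝ) < (K / (K - w)) ^ t →
      ∃ S : Finset (Fin n), S.card ≤ t ∧ ∀ A ∈ F, ∃ j ∈ S, j ∈ A := by
  have hKpos : 0 < K := hw.trans hwK
  have hKw : 0 < K - w := by linarith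
  intro t
  induction t with
  | zero =>
    intro F hF hcard
    refine ⟨∅, le_refl _, fun A hA => absurd hA ?_⟩
    have : F.card = 0 := by
      have : (F.card : ℝ) < 1 := by simpa using hcard
      exact_mod_cast Nat.lt_one_iff.mp (by exact_mod_cast this)
    simp [Finset.card_eq_zero.mp this]
  | succ t ih =>
    intro F hF hcard
    rcases F.eq_empty_or_nonempty with rfl | hne
    · exact ⟨∅, by simp, by simp⟩
    obtain ⟨A₀, hA₀⟩ := hne
    have hA₀ne : A₀.Nonempty := by
      rcases A₀.eq_empty_or_nonempty with rfl | h
      · have := hF ∅ hA₀; simp at this; linarith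
      · exact h
    obtain ⟨j₁, -⟩ := hA₀ne
    obtain ⟨j₀, -, hj₀⟩ := Finset.exists_max_image Finset.univ
      (fun j => ((F.filter fun A => j ∈ A).card : ℝ)) ⟨j₁, Finset.mem_univ _⟩
    set D : Fin n → ℝ := fun j => ((F.filter fun A => j ∈ A).card : ℝ) with hD
    have hD0 : 0 ≤ D j₀ := Nat.cast_nonneg _
    have hdc : (F.card : ℝ) * w ≤ ∑ j, q j * D j := by
      have h1 : (F.card : ℝ) * w = ∑ _A ∈ F, w := by
        rw [Finset.sum_const, nsmul_eq_mul]
      rw [h1]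
      refine (Finset.sum_le_sum hF).trans (le_of_eq ?_)
      calc ∑ A ∈ F, ∑ j ∈ A, q j
          = ∑ A ∈ F, ∑ j : Fin n, if j ∈ A then q j else 0 := by
            refine Finset.sum_congr rfl fun A _ => ?_
            rw [Finset.sum_ite_mem, Finset.univ_inter]
        _ = ∑ j : Fin n, ∑ A ∈ F, if j ∈ A then q j else 0 := Finset.sum_comm
        _ = ∑ j, q j * D j := by
            refine Finset.sum_congr rfl fun j _ => ?_
            rw [← Finset.sum_filter, Finset.sum_const, nsmul_eq_mul, mul_comm, hD]
    have hsum' : ∑ j, q j * D j ≤ K * D j₀ := by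
      calc ∑ j, q j * D j ≤ ∑ j, q j * D j₀ :=
            Finset.sum_le_sum fun j _ =>
              mul_le_mul_of_nonneg_left (hj₀ j (Finset.mem_univ _)) (hq j)
        _ = (∑ j, q j) * D j₀ := by rw [← Finset.sum_mul]
        _ ≤ K * D j₀ := mul_le_mul_of_nonneg_right hK hD0
    have hmain : (F.card : ℝ) * w ≤ K * D j₀ := hdc.trans hsum'
    set F' := F.filter fun A => j₀ ∉ A with hF'
    have hcards : (F'.card : ℝ) = (F.card : ℝ) - D j₀ := by
      have hle : (F.filter fun A => j₀ ∈ A).card ≤ F.card :=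
        Finset.card_le_card (Finset.filter_subset _ _)
      rw [hF', Finset.filter_not, Finset.card_sdiff_of_subset (Finset.filter_subset _ _),
        Nat.cast_sub hle, hD]
    have hF'card : (F'.card : ℝ) < (K / (K - w)) ^ t := by
      have hstep : (F'.card : ℝ) ≤ (F.card : ℝ) * ((K - w) / K) := by
        rw [hcards, ← mul_div_assoc, le_div_iff₀ hKpos]
        nlinarith
      have hstep2 : (F.card : ℝ) * ((K - w) / K) < (K / (K - w)) ^ (t + 1) * ((K - w) / K) :=
        mul_lt_mul_of_pos_right hcard (by positivity)
      have hone : K / (K - w) * ((K - w) / K) = 1 := by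
        field_simp
      have hpow : (K / (K - w)) ^ (t + 1) * ((K - w) / K) = (K / (K - w)) ^ t := by
        rw [pow_succ, mul_assoc, hone, mul_one]
      linarith
    obtain ⟨S, hScard, hShits⟩ := ih F'
      (fun A hA => hF A (Finset.mem_filter.mp hA).1) hF'card
    refine ⟨insert j₀ S, (Finset.card_insert_le _ _).trans (Nat.succ_le_succ hScard), ?_⟩
    intro A hA
    by_cases hj : j₀ ∈ A
    · exact ⟨j₀, Finset.mem_insert_self _ _, hj⟩
    · obtain ⟨j, hjS, hjA⟩ := hShits A (Finset.mem_filter.mpr ⟨hA, hj⟩)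
      exact ⟨j, Finset.mem_insert_of_mem hjS, hjA⟩

/-! ### Counting lemmas -/

lemma count_le {n k : ℕ} (i : Fin k → Fin (n + 1)) :
    ∑ j : Fin n, ((Finset.univ.filter fun m => i m = j.succ).card : ℝ) ≤ k := by
  have key : ∀ m : Fin k,
      ∑ j : Fin n, (if i m = j.succ then (1 : ℝ) else 0) ≤ 1 := by
    intro m
    induction (i m) using Fin.cases with
    | zero =>
      have : ∀ j : Fin n, ((0 : Fin (n + 1)) = j.succ) ↔ False := fun j =>
        iff_false_intro (Ne.symm (Fin.succ_ne_zero j))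
      simp only [this, if_false]
      norm_num
    | succ j₀ =>
      simp only [Fin.succ_inj]
      rw [Finset.sum_ite_eq]
      simp
  calc ∑ j : Fin n, ((Finset.univ.filter fun m => i m = j.succ).card : ℝ)
      = ∑ j : Fin n, ∑ m : Fin k, (if i m = j.succ then (1 : ℝ) else 0) := by
        refine Finset.sum_congr rfl fun j _ => ?_
        rw [Finset.card_filter]
        push_cast
        rfl
    _ = ∑ m : Fin k, ∑ j : Fin n, (if i m = j.succ then (1 : ℝ) else 0) := Finset.sum_comm
    _ ≤ ∑ _m : Fin k, (1 : ℝ) := Finset.sum_le_sum fun m _ => key m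
    _ = k := by simp

lemma diff_count {n k : ℕ} (x y : Fin n → Bool) (i : Fin k → Fin (n + 1)) :
    ((Finset.univ.filter fun m => extendBit x (i m) ≠ extendBit y (i m)).card : ℝ) =
      ∑ j ∈ Finset.univ.filter (fun j => x j ≠ y j),
        ((Finset.univ.filter fun m => i m = j.succ).card : ℝ) := by
  have key : ∀ m : Fin k,
      (if extendBit x (i m) ≠ extendBit y (i m) then (1 : ℝ) else 0) =
        ∑ j ∈ Finset.univ.filter (fun j => x j ≠ y j),
          (if i m = j.succ then (1 : ℝ) else 0) := by
    intro m
    induction (i m) using Fin.cases with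
    | zero =>
      have h0 : ∀ j : Fin n, ((0 : Fin (n + 1)) = j.succ) ↔ False := fun j =>
        iff_false_intro (Ne.symm (Fin.succ_ne_zero j))
      simp only [extendBit, Fin.cases_zero, h0, if_false, ne_eq, not_true_eq_false]
      simp
    | succ j₀ =>
      simp only [extendBit, Fin.cases_succ, Fin.succ_inj]
      rw [Finset.sum_ite_eq]
      by_cases hxy : x j₀ = y j₀ <;> simp [hxy]
  calc ((Finset.univ.filter fun m => extendBit x (i m) ≠ extendBit y (i m)).card : ℝ)
      = ∑ m : Fin k, (if extendBit x (i m) ≠ extendBit y (i m) then (1 : ℝ) else 0) := by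
        rw [Finset.card_filter]; push_cast; rfl
    _ = ∑ m : Fin k, ∑ j ∈ Finset.univ.filter (fun j => x j ≠ y j),
          (if i m = j.succ then (1 : ℝ) else 0) :=
        Finset.sum_congr rfl fun m _ => key m
    _ = ∑ j ∈ Finset.univ.filter (fun j => x j ≠ y j), ∑ m : Fin k,
          (if i m = j.succ then (1 : ℝ) else 0) := Finset.sum_comm
    _ = _ := by
        refine Finset.sum_congr rfl fun j _ => ?_
        rw [Finset.card_filter]; push_cast; rfl

lemma dsign_prod_ge {n k : ℕ} (x y : Fin n → Bool) (i : Fin k → Fin (n + 1)) :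
    1 - 2 * ((Finset.univ.filter fun m =>
        extendBit x (i m) ≠ extendBit y (i m)).card : ℝ) ≤
      dsign k x i * dsign k y i := by
  have hprod : dsign k x i * dsign k y i =
      ∏ m, (if extendBit x (i m) ≠ extendBit y (i m) then (-1 : ℝ) else 1) := by
    unfold dsign
    rw [← Finset.prod_mul_distrib]
    refine Finset.prod_congr rfl fun m _ => ?_
    cases hx : extendBit x (i m) <;> cases hy : extendBit y (i m) <;> simp
  have hpow : (∏ m, (if extendBit x (i m) ≠ extendBit y (i m) then (-1 : ℝ) else 1)) =
      (-1 : ℝ) ^ (Finset.univ.filter fun m =>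
        extendBit x (i m) ≠ extendBit y (i m)).card := by
    rw [Finset.prod_ite, Finset.prod_const, Finset.prod_const, one_pow, mul_one]
  rw [hprod, hpow]
  exact neg_one_pow_ge _


/-- Norm preservation under the oracle. -/
lemma oracle_norm {n k : ℕ} (x : Fin n → Bool) (ψ : (Fin k → Fin (n + 1)) → ℂ)
    (hψ : ∑ i, ‖ψ i‖ ^ 2 = 1) :
    star (oracleK n k x *ᵥ ψ) ⬝ᵥ (oracleK n k x *ᵥ ψ) = 1 := by
  rw [inner_formula]
  have h : ∑ i, dsign k x i * dsign k x i * ‖ψ i‖ ^ 2 = 1 := by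
    rw [← hψ]
    exact Finset.sum_congr rfl fun i _ => by rw [dsign_mul_self, one_mul]
  rw [h, Complex.ofReal_one]

/-- Lower bound on the query mass of the set of differing indices of a pair. -/
lemma pair_bound {n k : ℕ} {C : Finset (Fin n → Bool)} {ε : ℝ}
    (hε0 : 0 ≤ ε) (hε1 : ε < 1 / 2)
    (ψ : (Fin k → Fin (n + 1)) → ℂ) (hψ : ∑ i, ‖ψ i‖ ^ 2 = 1)
    (M : (Fin n → Bool) → Matrix (Fin k → Fin (n + 1)) (Fin k → Fin (n + 1)) ℂ)
    (hM : ∀ x ∈ C, (M x).PosSemidef)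
    (hMI : (1 - ∑ x ∈ C, M x).PosSemidef)
    (hsucc : ∀ x ∈ C,
      ((1 - ε : ℝ) : ℂ) ≤ star ψ ⬝ᵥ ((oracleK n k x * M x * oracleK n k x) *ᵥ ψ))
    {x y : Fin n → Bool} (hx : x ∈ C) (hy : y ∈ C) (hxy : x ≠ y) :
    (1 - 2 * Real.sqrt (ε * (1 - ε))) / 2 ≤
      ∑ j ∈ Finset.univ.filter (fun j => x j ≠ y j), qwt ψ j := by
  classical
  have hsub : ∀ s : Finset (Fin n → Bool), s ⊆ C → (1 - ∑ z ∈ s, M z).PosSemidef := by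
    intro s hs
    have hsum : (∑ z ∈ C \ s, M z).PosSemidef :=
      Finset.sum_induction M Matrix.PosSemidef (fun _ _ ha hb => ha.add hb)
        Matrix.PosSemidef.zero (fun z hz => hM z (Finset.mem_sdiff.mp hz).1)
    have heq : (1 : Matrix _ _ ℂ) - ∑ z ∈ s, M z =
        (1 - ∑ z ∈ C, M z) + ∑ z ∈ C \ s, M z := by
      rw [← Finset.sum_sdiff hs (f := M)]
      abel
    rw [heq]
    exact hMI.add hsum
  have hMx := hM x hx
  have hMy := hM y hy
  have hCx : (1 - M x).PosSemidef := by
    have h := hsub {x} (by simpa using hx)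
    simpa using h
  have hCxy : (1 - M x - M y).PosSemidef := by
    have hss : ({x, y} : Finset (Fin n → Bool)) ⊆ C := by
      intro z hz
      rcases Finset.mem_insert.mp hz with rfl | hz
      · exact hx
      · rw [Finset.mem_singleton.mp hz]; exact hy
    have h := hsub {x, y} hss
    rwa [Finset.sum_pair hxy, sub_add_eq_sub_sub] at h
  have hnx : star (oracleK n k x *ᵥ ψ) ⬝ᵥ (oracleK n k x *ᵥ ψ) = 1 := oracle_norm x ψ hψ
  have hny : star (oracleK n k y *ᵥ ψ) ⬝ᵥ (oracleK n k y *ᵥ ψ) = 1 := oracle_norm y ψ hψ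
  -- success probabilities
  have hsx : 1 - ε ≤ (star (oracleK n k x *ᵥ ψ) ⬝ᵥ (M x *ᵥ (oracleK n k x *ᵥ ψ))).re := by
    have h := hsucc x hx
    rw [sandwich] at h
    have h2 := (Complex.le_def.mp h).1
    rwa [Complex.ofReal_re] at h2
  have hsy : 1 - ε ≤ (star (oracleK n k y *ᵥ ψ) ⬝ᵥ (M y *ᵥ (oracleK n k y *ᵥ ψ))).re := by
    have h := hsucc y hy
    rw [sandwich] at h
    have h2 := (Complex.le_def.mp h).1
    rwa [Complex.ofReal_re] at h2
  have repos : ∀ (N : Matrix (Fin k → Fin (n + 1)) (Fin k → Fin (n + 1)) ℂ)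
      (hN : N.PosSemidef) (v : (Fin k → Fin (n + 1)) → ℂ),
      0 ≤ (star v ⬝ᵥ (N *ᵥ v)).re := by
    intro N hN v
    have h := (Complex.le_def.mp (hN.dotProduct_mulVec_nonneg v)).1
    rwa [Complex.zero_re] at h
  set a := (star (oracleK n k x *ᵥ ψ) ⬝ᵥ (M x *ᵥ (oracleK n k x *ᵥ ψ))).re with ha
  set b := (star (oracleK n k y *ᵥ ψ) ⬝ᵥ (M x *ᵥ (oracleK n k y *ᵥ ψ))).re with hb
  have expand1 : star (oracleK n k x *ᵥ ψ) ⬝ᵥ ((1 - M x) *ᵥ (oracleK n k x *ᵥ ψ)) =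
      1 - star (oracleK n k x *ᵥ ψ) ⬝ᵥ (M x *ᵥ (oracleK n k x *ᵥ ψ)) := by
    rw [Matrix.sub_mulVec, Matrix.one_mulVec, dotProduct_sub, hnx]
  have expand2 : star (oracleK n k y *ᵥ ψ) ⬝ᵥ ((1 - M x) *ᵥ (oracleK n k y *ᵥ ψ)) =
      1 - star (oracleK n k y *ᵥ ψ) ⬝ᵥ (M x *ᵥ (oracleK n k y *ᵥ ψ)) := by
    rw [Matrix.sub_mulVec, Matrix.one_mulVec, dotProduct_sub, hny]
  have expand3 : star (oracleK n k y *ᵥ ψ) ⬝ᵥ ((1 - M x - M y) *ᵥ (oracleK n k y *ᵥ ψ)) =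
      1 - star (oracleK n k y *ᵥ ψ) ⬝ᵥ (M x *ᵥ (oracleK n k y *ᵥ ψ))
        - star (oracleK n k y *ᵥ ψ) ⬝ᵥ (M y *ᵥ (oracleK n k y *ᵥ ψ)) := by
    rw [Matrix.sub_mulVec, Matrix.sub_mulVec, Matrix.one_mulVec, dotProduct_sub,
      dotProduct_sub, hny]
  have e1 : (star (oracleK n k x *ᵥ ψ) ⬝ᵥ ((1 - M x) *ᵥ (oracleK n k x *ᵥ ψ))).re = 1 - a := by
    rw [expand1, Complex.sub_re, Complex.one_re, ha]
  have e2 : (star (oracleK n k y *ᵥ ψ) ⬝ᵥ ((1 - M x) *ᵥ (oracleK n k y *ᵥ ψ))).re = 1 - b := by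
    rw [expand2, Complex.sub_re, Complex.one_re, hb]
  have ha2 : a ≤ 1 := by
    have h := repos _ hCx (oracleK n k x *ᵥ ψ)
    rw [e1] at h
    linarith
  have hb0 : 0 ≤ b := repos _ hMx (oracleK n k y *ᵥ ψ)
  have hb1 : b ≤ ε := by
    have h := repos _ hCxy (oracleK n k y *ᵥ ψ)
    rw [expand3] at h
    simp only [Complex.sub_re, Complex.one_re] at h
    have := hsy
    linarith
  -- Cauchy–Schwarz split
  have hsplit : star (oracleK n k x *ᵥ ψ) ⬝ᵥ (oracleK n k y *ᵥ ψ) =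
      star (oracleK n k x *ᵥ ψ) ⬝ᵥ (M x *ᵥ (oracleK n k y *ᵥ ψ)) +
        star (oracleK n k x *ᵥ ψ) ⬝ᵥ ((1 - M x) *ᵥ (oracleK n k y *ᵥ ψ)) := by
    rw [Matrix.sub_mulVec, Matrix.one_mulVec, dotProduct_sub]
    ring
  have h1 := psd_cauchy_schwarz hMx (oracleK n k x *ᵥ ψ) (oracleK n k y *ᵥ ψ)
  have h2 := psd_cauchy_schwarz hCx (oracleK n k x *ᵥ ψ) (oracleK n k y *ᵥ ψ)
  rw [e1, e2] at h2
  have hre : (star (oracleK n k x *ᵥ ψ) ⬝ᵥ (oracleK n k y *ᵥ ψ)).re ≤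
      2 * Real.sqrt (ε * (1 - ε)) := by
    calc (star (oracleK n k x *ᵥ ψ) ⬝ᵥ (oracleK n k y *ᵥ ψ)).re
        ≤ ‖star (oracleK n k x *ᵥ ψ) ⬝ᵥ (oracleK n k y *ᵥ ψ)‖ := by
          exact Complex.re_le_norm _
      _ ≤ ‖star (oracleK n k x *ᵥ ψ) ⬝ᵥ (M x *ᵥ (oracleK n k y *ᵥ ψ))‖ +
            ‖star (oracleK n k x *ᵥ ψ) ⬝ᵥ ((1 - M x) *ᵥ (oracleK n k y *ᵥ ψ))‖ := by
          rw [hsplit]; exact norm_add_le _ _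
      _ ≤ Real.sqrt a * Real.sqrt b + Real.sqrt (1 - a) * Real.sqrt (1 - b) :=
          add_le_add h1 h2
      _ ≤ 2 * Real.sqrt (ε * (1 - ε)) := sqrt_bound hε0 hε1 hsx ha2 hb0 hb1
  -- combinatorial lower bound on the real part
  have hlow : 1 - 2 * ∑ j ∈ Finset.univ.filter (fun j => x j ≠ y j), qwt ψ j ≤
      (star (oracleK n k x *ᵥ ψ) ⬝ᵥ (oracleK n k y *ᵥ ψ)).re := by
    rw [inner_formula, Complex.ofReal_re]
    have hsw : ∑ i, ‖ψ i‖ ^ 2 *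
        ((Finset.univ.filter fun m => extendBit x (i m) ≠ extendBit y (i m)).card : ℝ) =
        ∑ j ∈ Finset.univ.filter (fun j => x j ≠ y j), qwt ψ j := by
      calc ∑ i, ‖ψ i‖ ^ 2 *
            ((Finset.univ.filter fun m => extendBit x (i m) ≠ extendBit y (i m)).card : ℝ)
          = ∑ i, ∑ j ∈ Finset.univ.filter (fun j => x j ≠ y j),
              ‖ψ i‖ ^ 2 * ((Finset.univ.filter fun m => i m = j.succ).card : ℝ) := by
            refine Finset.sum_congr rfl fun i _ => ?_
            rw [diff_count x y i, Finset.mul_sum]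
        _ = ∑ j ∈ Finset.univ.filter (fun j => x j ≠ y j), qwt ψ j := by
            rw [Finset.sum_comm]
            rfl
    have hterm : ∀ i : Fin k → Fin (n + 1),
        (1 - 2 * ((Finset.univ.filter fun m =>
            extendBit x (i m) ≠ extendBit y (i m)).card : ℝ)) * ‖ψ i‖ ^ 2 ≤
          dsign k x i * dsign k y i * ‖ψ i‖ ^ 2 := fun i =>
      mul_le_mul_of_nonneg_right (dsign_prod_ge x y i) (by positivity)
    calc 1 - 2 * ∑ j ∈ Finset.univ.filter (fun j => x j ≠ y j), qwt ψ j
        = ∑ i, (1 - 2 * ((Finset.univ.filter fun m =>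
            extendBit x (i m) ≠ extendBit y (i m)).card : ℝ)) * ‖ψ i‖ ^ 2 := by
          rw [← hsw]
          rw [show ∑ i, (1 - 2 * ((Finset.univ.filter fun m =>
              extendBit x (i m) ≠ extendBit y (i m)).card : ℝ)) * ‖ψ i‖ ^ 2 =
            ∑ i, (‖ψ i‖ ^ 2 - 2 * (‖ψ i‖ ^ 2 *
              ((Finset.univ.filter fun m =>
                extendBit x (i m) ≠ extendBit y (i m)).card : ℝ))) from
            Finset.sum_congr rfl fun i _ => by ring]
          rw [Finset.sum_sub_distrib, ← Finset.mul_sum, hψ]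
      _ ≤ ∑ i, dsign k x i * dsign k y i * ‖ψ i‖ ^ 2 :=
          Finset.sum_le_sum fun i _ => hterm i
  linarith

/-! ### Main theorem -/

/-- If a nonadaptive quantum query algorithm `(ψ, (M_x)_{x∈C})` making `k`
queries learns a concept class `C` of size `m ≥ 2` with failure probability at most
`ε < 1/2`, then there is a separating set `S ⊆ [n]`, i.e. a set on which every pair of
distinct concepts differs, with `|S| ≤ 4k·log₂(m)/(1 − 2√(ε(1−ε)))`. -/
theorem nonadaptive_quantum_learning_separating_set
    (n k m : ℕ) (hk : 1 ≤ k)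
    (C : Finset (Fin n → Bool)) (hm : C.card = m) (hm2 : 2 ≤ m)
    (ε : ℝ) (hε0 : 0 ≤ ε) (hε1 : ε < 1 / 2)
    (ψ : (Fin k → Fin (n + 1)) → ℂ) (hψ : ∑ i, ‖ψ i‖ ^ 2 = 1)
    (M : (Fin n → Bool) → Matrix (Fin k → Fin (n + 1)) (Fin k → Fin (n + 1)) ℂ)
    (hM : ∀ x ∈ C, (M x).PosSemidef)
    (hMI : (1 - ∑ x ∈ C, M x).PosSemidef)
    (hsucc : ∀ x ∈ C,
      ((1 - ε : ℝ) : ℂ) ≤ star ψ ⬝ᵥ ((oracleK n k x * M x * oracleK n k x) *ᵥ ψ)) :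
    ∃ S : Finset (Fin n),
      (S.card : ℝ) ≤ 4 * k * Real.logb 2 m / (1 - 2 * Real.sqrt (ε * (1 - ε))) ∧
      ∀ x ∈ C, ∀ y ∈ C, x ≠ y → ∃ j ∈ S, x j ≠ y j := by
  classical
  set γ := 1 - 2 * Real.sqrt (ε * (1 - ε)) with hγdef
  have hsq2 : Real.sqrt (ε * (1 - ε)) < 1 / 2 := by
    have h := Real.sqrt_lt_sqrt (mul_nonneg hε0 (by linarith))
      (show ε * (1 - ε) < (1 / 2) ^ 2 by nlinarith)
    rwa [Real.sqrt_sq (by norm_num)] at h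
  have hγpos : 0 < γ := by rw [hγdef]; linarith
  have hγ1 : γ ≤ 1 := by
    rw [hγdef]; linarith [Real.sqrt_nonneg (ε * (1 - ε))]
  clear_value γ
  have hk1 : (1 : ℝ) ≤ (k : ℝ) := by exact_mod_cast hk
  have hq0 : ∀ j, 0 ≤ qwt ψ j := by
    intro j
    unfold qwt
    exact Finset.sum_nonneg fun i _ => by positivity
  have hqsum : ∑ j, qwt ψ j ≤ (k : ℝ) := by
    unfold qwt
    rw [Finset.sum_comm]
    calc ∑ i, ∑ j : Fin n, ‖ψ i‖ ^ 2 *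
          ((Finset.univ.filter fun m => i m = j.succ).card : ℝ)
        ≤ ∑ i, ‖ψ i‖ ^ 2 * (k : ℝ) := by
          refine Finset.sum_le_sum fun i _ => ?_
          rw [← Finset.mul_sum]
          exact mul_le_mul_of_nonneg_left (count_le i) (by positivity)
      _ = (∑ i, ‖ψ i‖ ^ 2) * (k : ℝ) := by rw [← Finset.sum_mul]
      _ = (k : ℝ) := by rw [hψ, one_mul]
  -- the family of difference sets
  set F := ((C ×ˢ C).filter fun p => p.1 ≠ p.2).image
    (fun p : (Fin n → Bool) × (Fin n → Bool) =>
      Finset.univ.filter fun j => p.1 j ≠ p.2 j) with hFdef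
  have hFsets : ∀ A ∈ F, γ / 2 ≤ ∑ j ∈ A, qwt ψ j := by
    intro A hA
    obtain ⟨p, hp, rfl⟩ := Finset.mem_image.mp hA
    obtain ⟨hpC, hpne⟩ := Finset.mem_filter.mp hp
    obtain ⟨hp1, hp2⟩ := Finset.mem_product.mp hpC
    rw [hγdef]
    exact pair_bound hε0 hε1 ψ hψ M hM hMI hsucc hp1 hp2 hpne
  have hFcard : (F.card : ℝ) ≤ (m : ℝ) * m := by
    have h1 : F.card ≤ ((C ×ˢ C).filter fun p => p.1 ≠ p.2).card := Finset.card_image_le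
    have h2 : ((C ×ˢ C).filter fun p => p.1 ≠ p.2).card ≤ (C ×ˢ C).card :=
      Finset.card_filter_le _ _
    have h3 : (C ×ˢ C).card = m * m := by rw [Finset.card_product, hm]
    have := (h1.trans h2).trans h3.le
    exact_mod_cast this
  -- numeric setup
  have hw : 0 < γ / 2 := by linarith
  have hwK : γ / 2 < (k : ℝ) := by linarith
  have hKw : 0 < (k : ℝ) - γ / 2 := by linarith
  set r := (k : ℝ) / ((k : ℝ) - γ / 2) with hrdef
  have hrpos : 0 < r := by positivity
  have hm1 : (1 : ℝ) < (m : ℝ) := by exact_mod_cast lt_of_lt_of_le one_lt_two hm2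
  have hlogm : 0 < Real.log m := Real.log_pos hm1
  have hlogm2 : Real.log 2 ≤ Real.log m :=
    Real.log_le_log (by norm_num) (by exact_mod_cast hm2)
  have hlogr : γ / 2 / (k : ℝ) ≤ Real.log r := by
    have e1 : ((k : ℝ) - γ / 2) / (k : ℝ) ≤ Real.exp (-(γ / 2 / (k : ℝ))) := by
      have h := Real.add_one_le_exp (-(γ / 2 / (k : ℝ)))
      have heq : ((k : ℝ) - γ / 2) / (k : ℝ) = -(γ / 2 / (k : ℝ)) + 1 := by
        field_simp
        ring
      rw [heq]
      exact h
    have e2 : Real.exp (γ / 2 / (k : ℝ)) ≤ r := by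
      have hrinv : r = (((k : ℝ) - γ / 2) / (k : ℝ))⁻¹ := by
        rw [inv_div]
      have hexp : Real.exp (γ / 2 / (k : ℝ)) = (Real.exp (-(γ / 2 / (k : ℝ))))⁻¹ := by
        rw [Real.exp_neg, inv_inv]
      rw [hrinv, hexp]
      exact inv_anti₀ (by positivity) e1
    exact (Real.le_log_iff_exp_le hrpos).mpr e2
  set t := ⌊4 * (k : ℝ) / γ * Real.log m⌋₊ + 1 with htdef
  have ht : 4 * (k : ℝ) / γ * Real.log m < (t : ℝ) := by
    rw [htdef]
    push_cast
    exact Nat.lt_floor_add_one _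
  have hcardF : (F.card : ℝ) < r ^ t := by
    have hmm : (m : ℝ) * m < r ^ t := by
      have hlog : Real.log ((m : ℝ) * m) < Real.log (r ^ t) := by
        rw [Real.log_mul (by positivity) (by positivity), Real.log_pow]
        have step1 : 2 * Real.log m = 4 * (k : ℝ) / γ * Real.log m * (γ / 2 / (k : ℝ)) := by
          field_simp
          ring
        have step2 : 4 * (k : ℝ) / γ * Real.log m * (γ / 2 / (k : ℝ)) <
            (t : ℝ) * (γ / 2 / (k : ℝ)) :=
          mul_lt_mul_of_pos_right ht (by positivity)
        have step3 : (t : ℝ) * (γ / 2 / (k : ℝ)) ≤ (t : ℝ) * Real.log r :=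
          mul_le_mul_of_nonneg_left hlogr (by positivity)
        linarith
      have hpos1 : (0 : ℝ) < (m : ℝ) * m := by positivity
      exact (Real.log_lt_log_iff hpos1 (by positivity)).mp hlog
    linarith [hFcard]
  obtain ⟨S, hScard, hShits⟩ :=
    greedy_hitting (qwt ψ) hq0 (k : ℝ) (γ / 2) hw hwK hqsum t F hFsets hcardF
  clear_value F r t
  refine ⟨S, ?_, ?_⟩
  · -- cardinality bound
    have h1 : (t : ℝ) ≤ 4 * (k : ℝ) / γ * Real.log m + 1 := by
      rw [htdef]
      push_cast
      have := Nat.floor_le (show (0 : ℝ) ≤ 4 * (k : ℝ) / γ * Real.log m by positivity)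
      linarith
    have hlog2pos : (0 : ℝ) < Real.log 2 := Real.log_pos (by norm_num)
    have hcoef : (4 : ℝ) ≤ 4 * (k : ℝ) / γ := by
      rw [le_div_iff₀ hγpos]
      nlinarith
    have hB : 4 * Real.log 2 ≤ 4 * (k : ℝ) / γ * Real.log m := by
      calc 4 * Real.log 2 ≤ 4 * (k : ℝ) / γ * Real.log 2 :=
            mul_le_mul_of_nonneg_right hcoef hlog2pos.le
        _ ≤ 4 * (k : ℝ) / γ * Real.log m :=
            mul_le_mul_of_nonneg_left hlogm2 (by positivity)
    have h2a := Real.log_two_gt_d9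
    have h2b := Real.log_two_lt_d9
    have hBb : 4 * (k : ℝ) / γ * Real.log m + 1 ≤
        4 * (k : ℝ) / γ * Real.log m / Real.log 2 := by
      rw [le_div_iff₀ hlog2pos]
      nlinarith
    have heq : 4 * (k : ℝ) * Real.logb 2 (m : ℝ) / γ =
        4 * (k : ℝ) / γ * Real.log m / Real.log 2 := by
      rw [Real.logb]
      field_simp
    have hS1 : (S.card : ℝ) ≤ (t : ℝ) := by exact_mod_cast hScard
    rw [heq]
    linarith
  · -- separation
    intro x hx y hy hxy
    have hmem : (Finset.univ.filter fun j => x j ≠ y j) ∈ F := by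
      rw [hFdef]
      refine Finset.mem_image.mpr ⟨(x, y), ?_, rfl⟩
      exact Finset.mem_filter.mpr ⟨Finset.mem_product.mpr ⟨hx, hy⟩, hxy⟩
    obtain ⟨j, hjS, hjA⟩ := hShits _ hmem
    exact ⟨j, hjS, (Finset.mem_filter.mp hjA).2⟩
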